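/- (Goursat for exact Mal'cev categories) Let C be an exact Mal'cev category and r ↪ x × y a relation. Let x̄ and ȳ be the images of r in x and y respectively, and let c be the pushout of r ↠ x̄ along r ↠ ȳ (the core of r). Then the pushout square (r ↠ x̄, r ↠ ȳ, x̄ ↠ c, ȳ ↠ c) is also a pullback square; in particular r ≅ x̄ ×_c ȳ, so every relation is determined by an isomorphism-free 'butterfly' of subquotients of x and y with common quotient c. -/

import Mathlib

open CategoryTheory CategoryTheory.Limits

section MalcevDefs

variable {C : Type*} [Category C] [HasFiniteLimits C]

/-- A relation on `x`, given as a jointly monic pair `p, q : R ⟶ x`, is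
reflexive if it contains the diagonal. -/
def RelReflexive {x R : C} (p q : R ⟶ x) : Prop :=
  ∃ d : x ⟶ R, d ≫ p = 𝟙 x ∧ d ≫ q = 𝟙 x

/-- A relation `p, q : R ⟶ x` is symmetric. -/
def RelSymmetric {x R : C} (p q : R ⟶ x) : Prop :=
  ∃ σ : R ⟶ R, σ ≫ p = q ∧ σ ≫ q = p

/-- A relation `p, q : R ⟶ x` is transitive: the composite relation
(obtained from the pullback `R ×_x R`) factors through `R`. -/
def RelTransitive {x R : C} (p q : R ⟶ x) : Prop :=
  ∃ t : pullback q p ⟶ R,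
    t ≫ p = pullback.fst q p ≫ p ∧ t ≫ q = pullback.snd q p ≫ q

/-- A regular category is Mal'cev if every reflexive relation is an
equivalence relation. -/
def MalcevCat (C : Type*) [Category C] [HasFiniteLimits C] : Prop :=
  ∀ {x R : C} (p q : R ⟶ x), Mono (prod.lift p q) →
    RelReflexive p q → RelSymmetric p q ∧ RelTransitive p q

/-- A regular category is exact if every equivalence relation is effective,
i.e. is the kernel pair of some morphism. -/
def ExactCat (C : Type*) [Category C] [HasFiniteLimits C] : Prop :=
  ∀ {x R : C} (p q : R ⟶ x), Mono (prod.lift p q) →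
    RelReflexive p q → RelSymmetric p q → RelTransitive p q →
    ∃ (y : C) (f : x ⟶ y), IsKernelPair f p q

end MalcevDefs

section AuxLemma

variable {C : Type*} [Category C] [HasFiniteLimits C] [HasStrongEpiMonoFactorisations C]

/-- Covering a pair of generalized elements of `S1`, `S2` through strong epis
`q1 : A1 ⟶ S1` and `q2 : A2 ⟶ S2`. -/
theorem cover_pair
    (hstab : ∀ {X Y Z : C} (f : X ⟶ Z) (g : Y ⟶ Z),
      StrongEpi g → StrongEpi (pullback.fst f g))
    {A1 A2 S1 S2 T : C} (q1 : A1 ⟶ S1) (q2 : A2 ⟶ S2)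
    (hq1 : StrongEpi q1) (hq2 : StrongEpi q2) (u : T ⟶ S1) (v : T ⟶ S2) :
    ∃ (W : C) (c : W ⟶ T) (w1 : W ⟶ A1) (w2 : W ⟶ A2),
      StrongEpi c ∧ w1 ≫ q1 = c ≫ u ∧ w2 ≫ q2 = c ≫ v := by
  refine ⟨pullback (pullback.fst u q1 ≫ v) q2,
    pullback.fst (pullback.fst u q1 ≫ v) q2 ≫ pullback.fst u q1,
    pullback.fst (pullback.fst u q1 ≫ v) q2 ≫ pullback.snd u q1,
    pullback.snd (pullback.fst u q1 ≫ v) q2, ?_, ?_, ?_⟩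
  · haveI := hstab u q1 hq1
    haveI := hstab (pullback.fst u q1 ≫ v) q2 hq2
    exact strongEpi_comp _ _
  · rw [Category.assoc, Category.assoc, ← pullback.condition]
  · rw [Category.assoc, pullback.condition]

/-- In a category with finite limits, strong epi-mono factorisations and
pullback-stable strong epis, strong epimorphisms are effective: any morphism
coequalizing the kernel pair factors through. -/
theorem strongEpi_kernelPair_desc
    (hstab : ∀ {X Y Z : C} (f : X ⟶ Z) (g : Y ⟶ Z),
      StrongEpi g → StrongEpi (pullback.fst f g))
    {A B D : C} (e : A ⟶ B) (he : StrongEpi e) (d : A ⟶ D)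
    (hd : pullback.fst e e ≫ d = pullback.snd e e ≫ d) :
    ∃ t : B ⟶ D, e ≫ t = d := by
  obtain ⟨F, q, m, hqe, hmo, hqm⟩ : ∃ (F : C) (q : A ⟶ F) (m : F ⟶ B ⨯ D),
      StrongEpi q ∧ Mono m ∧ q ≫ m = prod.lift e d :=
    ⟨_, _, _, inferInstance, inferInstance, image.fac _⟩
  obtain ⟨f, hf⟩ : ∃ f : F ⟶ B, m ≫ prod.fst = f := ⟨_, rfl⟩
  obtain ⟨n, hn⟩ : ∃ n : F ⟶ D, m ≫ prod.snd = n := ⟨_, rfl⟩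
  have hqf : q ≫ f = e := by rw [← hf, ← Category.assoc, hqm, prod.lift_fst]
  have hqd : q ≫ n = d := by rw [← hn, ← Category.assoc, hqm, prod.lift_snd]
  haveI hfe : StrongEpi f := by
    haveI : StrongEpi (q ≫ f) := by rw [hqf]; exact he
    exact strongEpi_of_strongEpi q f
  obtain ⟨W, c, w1, w2, hc, hw1, hw2⟩ :=
    cover_pair hstab q q hqe hqe (pullback.fst f f) (pullback.snd f f)
  have he1 : w1 ≫ e = w2 ≫ e := by
    rw [← hqf, ← Category.assoc, hw1, ← Category.assoc, hw2,
      Category.assoc, Category.assoc, pullback.condition]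
  have hwd : w1 ≫ d = w2 ≫ d := by
    rw [← pullback.lift_fst w1 w2 he1, Category.assoc, hd, ← Category.assoc,
      pullback.lift_snd]
  haveI : Epi c := hc.epi
  have hcc : c ≫ (pullback.fst f f ≫ n) = c ≫ (pullback.snd f f ≫ n) := by
    rw [← Category.assoc, ← hw1, Category.assoc, hqd, ← Category.assoc, ← hw2,
      Category.assoc, hqd]
    exact hwd
  have hms : pullback.fst f f ≫ n = pullback.snd f f ≫ n := by
    rwa [cancel_epi c] at hcc
  have huv : pullback.fst f f = pullback.snd f f := by
    rw [← cancel_mono m]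
    apply Limits.prod.hom_ext
    · rw [Category.assoc, Category.assoc, hf, pullback.condition]
    · rw [Category.assoc, Category.assoc, hn]
      exact hms
  haveI hfm : Mono f := by
    constructor
    intro Z α β hab
    rw [← pullback.lift_fst α β hab, huv, pullback.lift_snd]
  haveI : IsIso f := isIso_of_mono_of_strongEpi f
  refine ⟨inv f ≫ n, ?_⟩
  rw [← hqf, Category.assoc, IsIso.hom_inv_id_assoc]
  exact hqd

end AuxLemma

/-- (Goursat for exact Mal'cev categories.)  Let `C` be an exact Mal'cev
regular category and `r ↪ x ⨯ y` a relation, given by a jointly monic pair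
`p : R ⟶ x`, `q : R ⟶ y`.  Factor `p = ex ≫ mx` and `q = ey ≫ my` through the
images `x̄`, `ȳ`, and let `c` be the pushout of `ex` along `ey` (the core of
the relation).  Then the pushout square is also a pullback square; in
particular `R ≅ x̄ ×_c ȳ`. -/
theorem goursat_pushout_is_pullback
    {C : Type*} [Category C] [HasFiniteLimits C] [HasStrongEpiMonoFactorisations C]
    (hstab : ∀ {X Y Z : C} (f : X ⟶ Z) (g : Y ⟶ Z),
      StrongEpi g → StrongEpi (pullback.fst f g))
    (hmal : MalcevCat C) (hexact : ExactCat C)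
    {x y R xb yb c : C}
    (p : R ⟶ x) (q : R ⟶ y) (hmono : Mono (prod.lift p q))
    (ex : R ⟶ xb) (mx : xb ⟶ x) (hex : StrongEpi ex) (hmx : Mono mx)
    (hfacx : ex ≫ mx = p)
    (ey : R ⟶ yb) (my : yb ⟶ y) (hey : StrongEpi ey) (hmy : Mono my)
    (hfacy : ey ≫ my = q)
    (u : xb ⟶ c) (v : yb ⟶ c)
    (hpo : IsPushout ex ey u v) :
    IsPullback ex ey u v := by
  -- Step 1: the composite relation E = K[ex] ∘ K[ey] on R, as the image of
  -- the span from T = K[ex] ×_R K[ey].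
  have hK1 : pullback.fst ex ex ≫ ex = pullback.snd ex ex ≫ ex := pullback.condition
  have hK2 : pullback.fst ey ey ≫ ey = pullback.snd ey ey ≫ ey := pullback.condition
  have hT : pullback.fst (pullback.snd ex ex) (pullback.fst ey ey) ≫ pullback.snd ex ex
      = pullback.snd (pullback.snd ex ex) (pullback.fst ey ey) ≫ pullback.fst ey ey :=
    pullback.condition
  obtain ⟨E, g, m, hg, hmE, hgm⟩ :
      ∃ (E : C) (g : pullback (pullback.snd ex ex) (pullback.fst ey ey) ⟶ E) (m : E ⟶ R ⨯ R),
        StrongEpi g ∧ Mono m ∧ g ≫ m =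
          prod.lift
            (pullback.fst (pullback.snd ex ex) (pullback.fst ey ey) ≫ pullback.fst ex ex)
            (pullback.snd (pullback.snd ex ex) (pullback.fst ey ey) ≫ pullback.snd ey ey) :=
    ⟨_, _, _, inferInstance, inferInstance, image.fac _⟩
  obtain ⟨e1, he1⟩ : ∃ e1 : E ⟶ R, m ≫ prod.fst = e1 := ⟨_, rfl⟩
  obtain ⟨e2, he2⟩ : ∃ e2 : E ⟶ R, m ≫ prod.snd = e2 := ⟨_, rfl⟩
  have hge1 : g ≫ e1
      = pullback.fst (pullback.snd ex ex) (pullback.fst ey ey) ≫ pullback.fst ex ex := by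
    rw [← he1, ← Category.assoc, hgm, prod.lift_fst]
  have hge2 : g ≫ e2
      = pullback.snd (pullback.snd ex ex) (pullback.fst ey ey) ≫ pullback.snd ey ey := by
    rw [← he2, ← Category.assoc, hgm, prod.lift_snd]
  have hme : prod.lift e1 e2 = m := by
    apply Limits.prod.hom_ext
    · rw [prod.lift_fst, he1]
    · rw [prod.lift_snd, he2]
  have hmono2 : Mono (prod.lift e1 e2) := by rw [hme]; exact hmE
  -- Step 2: E is a reflexive relation, hence (Mal'cev + exactness) a kernel pair.
  have hrefl : RelReflexive e1 e2 := by
    refine ⟨pullback.lift (pullback.lift (𝟙 R) (𝟙 R) rfl) (pullback.lift (𝟙 R) (𝟙 R) rfl)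
      (by erw [pullback.lift_snd, pullback.lift_fst]) ≫ g, ?_, ?_⟩
    · rw [Category.assoc, hge1, ← Category.assoc, pullback.lift_fst, pullback.lift_fst]
    · rw [Category.assoc, hge2, ← Category.assoc, pullback.lift_snd, pullback.lift_snd]
  obtain ⟨hsym, htrans⟩ := hmal e1 e2 hmono2 hrefl
  obtain ⟨z, w, hkp⟩ := hexact e1 e2 hmono2 hrefl hsym htrans
  have hew : e1 ≫ w = e2 ≫ w := hkp.w
  -- Step 3: w coequalizes the kernel pairs of ex and ey.
  obtain ⟨t1, ht1a, ht1b⟩ : ∃ t1 : pullback ex ex ⟶ E,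
      t1 ≫ e1 = pullback.fst ex ex ∧ t1 ≫ e2 = pullback.snd ex ex := by
    refine ⟨pullback.lift (𝟙 _) (pullback.snd ex ex ≫ pullback.lift (𝟙 R) (𝟙 R) rfl)
      (by erw [Category.id_comp, Category.assoc, pullback.lift_fst, Category.comp_id]) ≫ g, ?_, ?_⟩
    · rw [Category.assoc, hge1, ← Category.assoc, pullback.lift_fst, Category.id_comp]
    · rw [Category.assoc, hge2, ← Category.assoc, pullback.lift_snd, Category.assoc,
        pullback.lift_snd, Category.comp_id]
  obtain ⟨t2, ht2a, ht2b⟩ : ∃ t2 : pullback ey ey ⟶ E,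
      t2 ≫ e1 = pullback.fst ey ey ∧ t2 ≫ e2 = pullback.snd ey ey := by
    refine ⟨pullback.lift (pullback.fst ey ey ≫ pullback.lift (𝟙 R) (𝟙 R) rfl) (𝟙 _)
      (by erw [Category.assoc, pullback.lift_snd, Category.comp_id, Category.id_comp]) ≫ g, ?_, ?_⟩
    · rw [Category.assoc, hge1, ← Category.assoc, pullback.lift_fst, Category.assoc,
        pullback.lift_fst, Category.comp_id]
    · rw [Category.assoc, hge2, ← Category.assoc, pullback.lift_snd, Category.id_comp]
  have hwx : pullback.fst ex ex ≫ w = pullback.snd ex ex ≫ w := by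
    rw [← ht1a, ← ht1b, Category.assoc, Category.assoc, hew]
  have hwy : pullback.fst ey ey ≫ w = pullback.snd ey ey ≫ w := by
    rw [← ht2a, ← ht2b, Category.assoc, Category.assoc, hew]
  -- Step 4: factor w through ex and ey, and through the pushout.
  obtain ⟨wx, hwx'⟩ := strongEpi_kernelPair_desc hstab ex hex w hwx
  obtain ⟨wy, hwy'⟩ := strongEpi_kernelPair_desc hstab ey hey w hwy
  obtain ⟨h, hh1, hh2⟩ : ∃ h : c ⟶ z, u ≫ h = wx ∧ v ≫ h = wy :=
    ⟨hpo.desc wx wy (hwx'.trans hwy'.symm), hpo.inl_desc _ _ _, hpo.inr_desc _ _ _⟩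
  -- Step 5: the comparison map k : R ⟶ xb ×_c yb.
  obtain ⟨k, hk1, hk2⟩ : ∃ k : R ⟶ pullback u v,
      k ≫ pullback.fst u v = ex ∧ k ≫ pullback.snd u v = ey :=
    ⟨pullback.lift ex ey hpo.w, pullback.lift_fst _ _ _, pullback.lift_snd _ _ _⟩
  -- k is a monomorphism.
  haveI hkmono : Mono k := by
    have hfac : k ≫ prod.lift (pullback.fst u v ≫ mx) (pullback.snd u v ≫ my)
        = prod.lift p q := by
      apply Limits.prod.hom_ext
      · rw [Category.assoc, prod.lift_fst, prod.lift_fst, ← Category.assoc, hk1, hfacx]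
      · rw [Category.assoc, prod.lift_snd, prod.lift_snd, ← Category.assoc, hk2, hfacy]
    haveI hmonoP : Mono (prod.lift (pullback.fst u v ≫ mx) (pullback.snd u v ≫ my)) := by
      constructor
      intro Z α β hab
      have h1 : (α ≫ pullback.fst u v) ≫ mx = (β ≫ pullback.fst u v) ≫ mx := by
        have := congrArg (fun t => t ≫ prod.fst) hab
        simp only [Category.assoc] at this
        erw [prod.lift_fst] at this
        simpa [Category.assoc] using this
      have h2 : (α ≫ pullback.snd u v) ≫ my = (β ≫ pullback.snd u v) ≫ my := by
        have := congrArg (fun t => t ≫ prod.snd) hab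
        simp only [Category.assoc] at this
        erw [prod.lift_snd] at this
        simpa [Category.assoc] using this
      exact pullback.hom_ext ((cancel_mono mx).mp h1) ((cancel_mono my).mp h2)
    haveI : Mono (k ≫ prod.lift (pullback.fst u v ≫ mx) (pullback.snd u v ≫ my)) := by
      rw [hfac]; exact hmono
    exact mono_of_mono k (prod.lift (pullback.fst u v ≫ mx) (pullback.snd u v ≫ my))
  -- Step 6: k is a strong epimorphism.
  have hfw : pullback.fst u v ≫ wx = pullback.snd u v ≫ wy := by
    rw [← hh1, ← hh2, ← Category.assoc, ← Category.assoc, pullback.condition]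
  obtain ⟨V, cV, r1, r2, hcV, hr1, hr2⟩ :=
    cover_pair hstab ex ey hex hey (pullback.fst u v) (pullback.snd u v)
  have hrw : r1 ≫ w = r2 ≫ w := by
    calc r1 ≫ w = (r1 ≫ ex) ≫ wx := by rw [← hwx', Category.assoc]
      _ = (cV ≫ pullback.fst u v) ≫ wx := by rw [hr1]
      _ = cV ≫ (pullback.fst u v ≫ wx) := by rw [Category.assoc]
      _ = cV ≫ (pullback.snd u v ≫ wy) := by rw [hfw]
      _ = (cV ≫ pullback.snd u v) ≫ wy := by rw [Category.assoc]
      _ = (r2 ≫ ey) ≫ wy := by rw [hr2]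
      _ = r2 ≫ w := by rw [← hwy', Category.assoc]
  obtain ⟨l, hl1, hl2⟩ : ∃ l : V ⟶ E, l ≫ e1 = r1 ∧ l ≫ e2 = r2 :=
    ⟨hkp.lift r1 r2 hrw, hkp.lift_fst _ _ _, hkp.lift_snd _ _ _⟩
  -- cover V through g
  have hc3 : StrongEpi (pullback.fst l g) := hstab l g hg
  have hcond3 : pullback.fst l g ≫ l = pullback.snd l g ≫ g := pullback.condition
  -- the diagonal element s of R
  obtain ⟨s, hs⟩ : ∃ s : pullback l g ⟶ R,
      pullback.snd l g ≫ (pullback.fst (pullback.snd ex ex) (pullback.fst ey ey)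
        ≫ pullback.snd ex ex) = s := ⟨_, rfl⟩
  have hsx : s ≫ ex = (pullback.fst l g ≫ cV) ≫ pullback.fst u v := by
    calc s ≫ ex
        = pullback.snd l g ≫ (pullback.fst (pullback.snd ex ex) (pullback.fst ey ey)
            ≫ (pullback.snd ex ex ≫ ex)) := by
          rw [← hs, Category.assoc, Category.assoc]
      _ = pullback.snd l g ≫ ((pullback.fst (pullback.snd ex ex) (pullback.fst ey ey)
            ≫ pullback.fst ex ex) ≫ ex) := by rw [← hK1, Category.assoc]
      _ = pullback.snd l g ≫ ((g ≫ e1) ≫ ex) := by rw [hge1]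
      _ = ((pullback.snd l g ≫ g) ≫ e1) ≫ ex := by
          simp only [Category.assoc]
      _ = ((pullback.fst l g ≫ l) ≫ e1) ≫ ex := by rw [hcond3]
      _ = pullback.fst l g ≫ ((l ≫ e1) ≫ ex) := by
          simp only [Category.assoc]
      _ = pullback.fst l g ≫ (r1 ≫ ex) := by rw [hl1]
      _ = pullback.fst l g ≫ (cV ≫ pullback.fst u v) := by rw [hr1]
      _ = (pullback.fst l g ≫ cV) ≫ pullback.fst u v := by rw [Category.assoc]
  have hsy : s ≫ ey = (pullback.fst l g ≫ cV) ≫ pullback.snd u v := by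
    calc s ≫ ey
        = pullback.snd l g ≫ ((pullback.fst (pullback.snd ex ex) (pullback.fst ey ey)
            ≫ pullback.snd ex ex) ≫ ey) := by rw [← hs, Category.assoc]
      _ = pullback.snd l g ≫ ((pullback.snd (pullback.snd ex ex) (pullback.fst ey ey)
            ≫ pullback.fst ey ey) ≫ ey) := by rw [hT]
      _ = pullback.snd l g ≫ (pullback.snd (pullback.snd ex ex) (pullback.fst ey ey)
            ≫ (pullback.snd ey ey ≫ ey)) := by rw [Category.assoc, hK2]
      _ = pullback.snd l g ≫ ((pullback.snd (pullback.snd ex ex) (pullback.fst ey ey)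
            ≫ pullback.snd ey ey) ≫ ey) := by rw [Category.assoc]
      _ = pullback.snd l g ≫ ((g ≫ e2) ≫ ey) := by rw [hge2]
      _ = ((pullback.snd l g ≫ g) ≫ e2) ≫ ey := by
          simp only [Category.assoc]
      _ = ((pullback.fst l g ≫ l) ≫ e2) ≫ ey := by rw [hcond3]
      _ = pullback.fst l g ≫ ((l ≫ e2) ≫ ey) := by
          simp only [Category.assoc]
      _ = pullback.fst l g ≫ (r2 ≫ ey) := by rw [hl2]
      _ = pullback.fst l g ≫ (cV ≫ pullback.snd u v) := by rw [hr2]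
      _ = (pullback.fst l g ≫ cV) ≫ pullback.snd u v := by rw [Category.assoc]
  have hsk : s ≫ k = pullback.fst l g ≫ cV := by
    apply pullback.hom_ext
    · rw [Category.assoc, hk1, hsx]
    · rw [Category.assoc, hk2, hsy]
  haveI : StrongEpi (pullback.fst l g ≫ cV) := by
    haveI := hc3; haveI := hcV
    exact strongEpi_comp _ _
  haveI : StrongEpi (s ≫ k) := by rw [hsk]; infer_instance
  haveI : StrongEpi k := strongEpi_of_strongEpi s k
  haveI : IsIso k := isIso_of_mono_of_strongEpi k
  exact IsPullback.of_iso_pullback ⟨hpo.w⟩ (asIso k) hk1 hk2
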